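/- The numbers t_{2n,0,j} satisfy the symmetry t_{2n,0,j} = t_{2n,0,2n-j} for 1 ≤ j ≤ 2n-1, and t_{2n,0,j} = t_{2n-1,0,j-1}; moreover t_{2n,0,0} = 0 and t_{2n-1,0,0} = 1. -/

import Mathlib

open MvPolynomial Finset

/-- The derivation for the grammar `G = {w → wx, x → yz, y → xz, z → xy}` on `ℚ[w,x,y,z]`
(`w = X 0`, `x = X 1`, `y = X 2`, `z = X 3`). -/
noncomputable def Dg : Derivation ℚ (MvPolynomial (Fin 4) ℚ) (MvPolynomial (Fin 4) ℚ) :=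
  MvPolynomial.mkDerivation ℚ ![X 0 * X 1, X 2 * X 3, X 1 * X 3, X 1 * X 2]

/-- `tC n i j` is the coefficient `t_{n,i,j}` of `D^n(w)`:
for even `n`, the coefficient of `w x^(2i) y^j z^(n-2i-j)`;
for odd `n`, the coefficient of `w x^(2i+1) y^j z^(n-1-2i-j)`.
Coefficients with negative indices are `0`. -/
noncomputable def tC (n : ℕ) (i j : ℤ) : ℚ :=
  if 0 ≤ i ∧ 0 ≤ j then
    MvPolynomial.coeff
      (Finsupp.single 0 1
        + Finsupp.single 1 ((if Even n then 2*i else 2*i+1).toNat)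
        + Finsupp.single 2 j.toNat
        + Finsupp.single 3 (((n:ℤ) - 2*i - j - if Even n then 0 else 1).toNat))
      ((fun p => Dg p)^[n] (X 0))
  else 0

section Aux

set_option linter.unnecessarySeqFocus false

local notation "s₀" => (Finsupp.single (0 : Fin 4) : ℕ → (Fin 4 →₀ ℕ))
local notation "s₁" => (Finsupp.single (1 : Fin 4) : ℕ → (Fin 4 →₀ ℕ))
local notation "s₂" => (Finsupp.single (2 : Fin 4) : ℕ → (Fin 4 →₀ ℕ))
local notation "s₃" => (Finsupp.single (3 : Fin 4) : ℕ → (Fin 4 →₀ ℕ))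

noncomputable def WW (n : ℕ) : MvPolynomial (Fin 4) ℚ := (fun p => Dg p)^[n] (X 0)

lemma WW_succ (n : ℕ) : WW (n+1) = Dg (WW n) := Function.iterate_succ_apply' _ _ _

local notation "W" => WW

lemma Dg_apply (p : MvPolynomial (Fin 4) ℚ) :
    Dg p = pderiv 0 p * (X 0 * X 1) + pderiv 1 p * (X 2 * X 3)
      + pderiv 2 p * (X 1 * X 3) + pderiv 3 p * (X 1 * X 2) := by
  have : Dg = (X 0 * X 1 : MvPolynomial (Fin 4) ℚ) • pderiv 0
      + (X 2 * X 3 : MvPolynomial (Fin 4) ℚ) • pderiv 1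
      + (X 1 * X 3 : MvPolynomial (Fin 4) ℚ) • pderiv 2
      + (X 1 * X 2 : MvPolynomial (Fin 4) ℚ) • pderiv 3 := by
    apply derivation_ext
    intro i
    fin_cases i <;>
      simp [Dg, Derivation.add_apply, Derivation.smul_apply, pderiv_X, Pi.single_apply]
  rw [this]
  simp [Derivation.add_apply, Derivation.smul_apply, smul_eq_mul]
  ring

lemma coeff_pderiv (i : Fin 4) (m : Fin 4 →₀ ℕ) (p : MvPolynomial (Fin 4) ℚ) :
    coeff m (pderiv i p) = (m i + 1 : ℚ) * coeff (m + Finsupp.single i 1) p := by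
  induction p using MvPolynomial.induction_on' with
  | add p q hp hq => simp [hp, hq, mul_add]
  | monomial s a =>
    rw [pderiv_monomial, coeff_monomial, coeff_monomial]
    rcases Nat.eq_zero_or_pos (s i) with h | h
    · have hne : s ≠ m + Finsupp.single i 1 := by
        intro he; rw [he] at h; simp at h
      rw [if_neg hne]
      split <;> simp [h]
    · have key : (s - Finsupp.single i 1 = m) ↔ (s = m + Finsupp.single i 1) := by
        constructor
        · intro he
          rw [← he, tsub_add_cancel_of_le]
          rwa [Finsupp.single_le_iff]
        · intro he; rw [he]; simp
      by_cases hh : s = m + Finsupp.single i 1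
      · rw [if_pos (key.2 hh), if_pos hh]
        have : s i = m i + 1 := by rw [hh]; simp
        rw [this]; push_cast; ring
      · rw [if_neg (fun he => hh (key.1 he)), if_neg hh, mul_zero]

lemma coeff_mul_XX_of_zero {p : MvPolynomial (Fin 4) ℚ} {m : Fin 4 →₀ ℕ} {a b : Fin 4}
    (h : m a = 0 ∨ m b = 0) : coeff m (p * (X a * X b)) = 0 := by
  rw [← mul_assoc, coeff_mul_X']
  rcases h with h | h
  · split
    · rw [coeff_mul_X']
      rw [if_neg]
      simp only [Finsupp.mem_support_iff, ne_eq, not_not]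
      simp [Finsupp.tsub_apply, h]
    · rfl
  · rw [if_neg]
    simp [Finsupp.mem_support_iff, h]

lemma coeff_mul_XX (p : MvPolynomial (Fin 4) ℚ) (m : Fin 4 →₀ ℕ) (a b : Fin 4) :
    coeff (m + Finsupp.single a 1 + Finsupp.single b 1) (p * (X a * X b)) = coeff m p := by
  rw [← mul_assoc, coeff_mul_X, coeff_mul_X]

lemma even_step (p : MvPolynomial (Fin 4) ℚ) (j k : ℕ) :
    coeff (s₀ 1 + s₂ (j+1) + s₃ (k+1)) (Dg p)
      = coeff (s₀ 1 + s₁ 1 + s₂ j + s₃ k) p := by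
  rw [Dg_apply]
  simp only [coeff_add]
  have hm : (s₀ 1 + s₂ (j+1) + s₃ (k+1)) =
      (s₀ 1 + s₂ j + s₃ k) + Finsupp.single 2 1 + Finsupp.single 3 1 := by
    rw [Finsupp.single_add, Finsupp.single_add]; abel
  have h1 : coeff (s₀ 1 + s₂ (j+1) + s₃ (k+1)) (pderiv 0 p * (X 0 * X 1)) = 0 :=
    coeff_mul_XX_of_zero (b := 1) (Or.inr (by simp [Finsupp.single_apply]))
  have h3 : coeff (s₀ 1 + s₂ (j+1) + s₃ (k+1)) (pderiv 2 p * (X 1 * X 3)) = 0 :=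
    coeff_mul_XX_of_zero (a := 1) (Or.inl (by simp [Finsupp.single_apply]))
  have h4 : coeff (s₀ 1 + s₂ (j+1) + s₃ (k+1)) (pderiv 3 p * (X 1 * X 2)) = 0 :=
    coeff_mul_XX_of_zero (a := 1) (Or.inl (by simp [Finsupp.single_apply]))
  rw [h1, h3, h4, hm, coeff_mul_XX, coeff_pderiv]
  have : (s₀ 1 + s₂ j + s₃ k) + Finsupp.single 1 1 = s₀ 1 + s₁ 1 + s₂ j + s₃ k := by abel
  rw [this]
  simp [Finsupp.single_apply]

lemma even_step_y0 (p : MvPolynomial (Fin 4) ℚ) (k : ℕ) :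
    coeff (s₀ 1 + s₃ k) (Dg p) = 0 := by
  rw [Dg_apply]
  simp only [coeff_add]
  rw [coeff_mul_XX_of_zero (b := 1) (Or.inr (by simp [Finsupp.single_apply])),
    coeff_mul_XX_of_zero (a := 2) (Or.inl (by simp [Finsupp.single_apply])),
    coeff_mul_XX_of_zero (a := 1) (Or.inl (by simp [Finsupp.single_apply])),
    coeff_mul_XX_of_zero (a := 1) (Or.inl (by simp [Finsupp.single_apply]))]
  ring

lemma odd_step_y0 (p : MvPolynomial (Fin 4) ℚ) (k : ℕ) :
    coeff (s₀ 1 + s₁ 1 + s₃ (k+1)) (Dg p)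
      = coeff (s₀ 1 + s₃ (k+1)) p + coeff (s₀ 1 + s₂ 1 + s₃ k) p := by
  rw [Dg_apply]
  simp only [coeff_add]
  have h2 : coeff (s₀ 1 + s₁ 1 + s₃ (k+1)) (pderiv 1 p * (X 2 * X 3)) = 0 :=
    coeff_mul_XX_of_zero (a := 2) (Or.inl (by simp [Finsupp.single_apply]))
  have h4 : coeff (s₀ 1 + s₁ 1 + s₃ (k+1)) (pderiv 3 p * (X 1 * X 2)) = 0 :=
    coeff_mul_XX_of_zero (b := 2) (Or.inr (by simp [Finsupp.single_apply]))
  have c1 : coeff (s₀ 1 + s₁ 1 + s₃ (k+1)) (pderiv 0 p * (X 0 * X 1))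
      = coeff (s₀ 1 + s₃ (k+1)) p := by
    rw [show (s₀ 1 + s₁ 1 + s₃ (k+1)) = s₃ (k+1) + Finsupp.single 0 1 + Finsupp.single 1 1
      from by abel, coeff_mul_XX, coeff_pderiv,
      show s₃ (k+1) + Finsupp.single 0 1 = s₀ 1 + s₃ (k+1) from by abel]
    simp [Finsupp.single_apply]
  have c3 : coeff (s₀ 1 + s₁ 1 + s₃ (k+1)) (pderiv 2 p * (X 1 * X 3))
      = coeff (s₀ 1 + s₂ 1 + s₃ k) p := by
    rw [show (s₀ 1 + s₁ 1 + s₃ (k+1)) = (s₀ 1 + s₃ k) + Finsupp.single 1 1 + Finsupp.single 3 1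
      from by rw [Finsupp.single_add]; abel, coeff_mul_XX, coeff_pderiv,
      show (s₀ 1 + s₃ k) + Finsupp.single 2 1 = s₀ 1 + s₂ 1 + s₃ k from by abel]
    simp [Finsupp.single_apply]
  rw [h2, h4, c1, c3]
  ring

noncomputable def σswap : Fin 4 ≃ Fin 4 := Equiv.swap 2 3

lemma σswap0 : σswap 0 = 0 := by decide
lemma σswap2 : σswap 2 = 3 := by decide
lemma σswap3 : σswap 3 = 2 := by decide

lemma rename_Dg (p : MvPolynomial (Fin 4) ℚ) :
    rename σswap (Dg p) = Dg (rename σswap p) := by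
  induction p using MvPolynomial.induction_on with
  | C a => simp [Dg]
  | add p q hp hq => simp [map_add, hp, hq]
  | mul_X p i hp =>
    have key : Dg (X (σswap i)) = rename σswap (Dg (X i)) := by
      fin_cases i <;>
        simp [Dg, σswap, Equiv.swap_apply_def, mkDerivation_X] <;> ring
    rw [Derivation.leibniz, map_mul, rename_X, Derivation.leibniz]
    simp only [smul_eq_mul, map_add, map_mul, rename_X]
    rw [key, hp]

lemma rename_iter (n : ℕ) :
    rename σswap (W n) = W n := by
  induction n with
  | zero => simp [WW, σswap0]
  | succ n ih =>
    rw [WW_succ, rename_Dg, ih]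

lemma coeff_sym (n a b : ℕ) :
    coeff (s₀ 1 + s₂ a + s₃ b) (W n) = coeff (s₀ 1 + s₂ b + s₃ a) (W n) := by
  have h := coeff_rename_mapDomain σswap σswap.injective (W n) (s₀ 1 + s₂ a + s₃ b)
  rw [rename_iter] at h
  rw [← h]
  congr 1
  rw [Finsupp.mapDomain_add, Finsupp.mapDomain_add, Finsupp.mapDomain_single,
    Finsupp.mapDomain_single, Finsupp.mapDomain_single, σswap0, σswap2, σswap3]
  abel

lemma h_one : ∀ m : ℕ, coeff (s₀ 1 + s₁ 1 + s₃ (2*m)) (W (2*m+1)) = 1 := by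
  intro m
  induction m with
  | zero =>
    have hW1 : W 1 = (1 : MvPolynomial (Fin 4) ℚ) * (X 0 * X 1) := by
      rw [show (1:ℕ) = 0+1 from rfl, WW_succ]
      simp [WW, Dg, mkDerivation_X]
    rw [show (2*0+1) = 1 from rfl, hW1,
      show (s₀ 1 + s₁ 1 + s₃ (2*0)) = 0 + Finsupp.single 0 1 + Finsupp.single 1 1 from by
        simp, coeff_mul_XX]
    simp
  | succ m ih =>
    have e1 : 2*(m+1)+1 = (2*m+2)+1 := by ring
    have e2 : 2*(m+1) = 2*m+2 := by ring
    have key : coeff (s₀ 1 + s₁ 1 + s₃ (2*(m+1))) (W (2*(m+1)+1)) =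
        coeff (s₀ 1 + s₃ ((2*m+1)+1)) (W ((2*m+1)+1))
          + coeff (s₀ 1 + s₂ 1 + s₃ (2*m+1)) (W ((2*m+1)+1)) := by
      rw [show 2*(m+1)+1 = ((2*m+1)+1)+1 from by ring, WW_succ ((2*m+1)+1),
        show 2*(m+1) = (2*m+1)+1 from by ring, odd_step_y0]
    rw [key, WW_succ (2*m+1), even_step_y0, zero_add]
    have h2 := even_step (W (2*m+1)) 0 (2*m)
    simp only [zero_add, Finsupp.single_zero, add_zero] at h2
    rw [h2]
    exact ih

lemma tC_even (n : ℕ) (j : ℕ) (hj : j ≤ 2*n) :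
    tC (2*n) 0 (j:ℤ) = coeff (s₀ 1 + s₂ j + s₃ (2*n - j)) (W (2*n)) := by
  rw [tC, if_pos ⟨le_refl 0, Int.natCast_nonneg j⟩,
    show (fun p => Dg p)^[2*n] (X (0:Fin 4)) = W (2*n) from rfl]
  congr 1
  have he : Even (2*n) := even_two_mul n
  rw [if_pos he, if_pos he]
  have h1 : ((2*(0:ℤ))).toNat = 0 := by norm_num
  have h2 : ((j:ℤ)).toNat = j := Int.toNat_natCast j
  have h3 : (((2*n:ℕ):ℤ) - 2*0 - (j:ℤ) - 0).toNat = 2*n - j := by omega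
  rw [h1, h2, h3]
  simp only [Finsupp.single_zero, add_zero]

lemma tC_odd (n : ℕ) (j : ℕ) (hn : 1 ≤ n) (hj1 : 1 ≤ j) (hj2 : j ≤ 2*n-1) :
    tC (2*n-1) 0 ((j:ℤ)-1)
      = coeff (s₀ 1 + s₁ 1 + s₂ (j-1) + s₃ (2*n-1-j)) (W (2*n-1)) := by
  rw [tC, if_pos ⟨le_refl 0, by omega⟩,
    show (fun p => Dg p)^[2*n-1] (X (0:Fin 4)) = W (2*n-1) from rfl]
  congr 1
  have he : ¬ Even (2*n-1) := by rw [Nat.even_iff]; omega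
  rw [if_neg he, if_neg he]
  have h1 : ((2*(0:ℤ)+1)).toNat = 1 := by norm_num
  have h2 : ((j:ℤ)-1).toNat = j - 1 := by omega
  have h3 : (((2*n-1:ℕ):ℤ) - 2*0 - ((j:ℤ)-1) - 1).toNat = 2*n-1-j := by omega
  rw [h1, h2, h3]

theorem stmt16 (n : ℕ) (hn : 1 ≤ n) :
    (∀ j : ℕ, 1 ≤ j → j ≤ 2*n-1 →
      tC (2*n) 0 (j:ℤ) = tC (2*n) 0 ((2*n : ℕ) - (j:ℤ)) ∧
      tC (2*n) 0 (j:ℤ) = tC (2*n-1) 0 ((j:ℤ)-1)) ∧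
    tC (2*n) 0 0 = 0 ∧ tC (2*n-1) 0 0 = 1 := by
  refine ⟨fun j hj1 hj2 => ⟨?_, ?_⟩, ?_, ?_⟩
  · have hc : ((2*n : ℕ) : ℤ) - (j:ℤ) = ((2*n - j : ℕ) : ℤ) := by omega
    rw [hc, tC_even n j (by omega), tC_even n (2*n - j) (by omega),
      show 2*n - (2*n - j) = j from by omega]
    exact coeff_sym (2*n) j (2*n - j)
  · rw [tC_even n j (by omega), tC_odd n j hn hj1 hj2,
      show (2*n : ℕ) = (2*n-1)+1 from by omega, WW_succ]
    have := even_step (WW (2*n-1)) (j-1) (2*n-1-j)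
    rw [show (j-1)+1 = j from by omega, show (2*n-1-j)+1 = (2*n-1)+1 - j from by omega] at this
    exact this
  · have h := tC_even n 0 (by omega)
    rw [Nat.cast_zero] at h
    rw [h, show (2*n : ℕ) = (2*n-1)+1 from by omega, WW_succ]
    rw [show (s₀ 1 + s₂ 0 + s₃ ((2*n-1)+1 - 0)) = s₀ 1 + s₃ ((2*n-1)+1) from by simp]
    exact even_step_y0 _ _
  · have h := tC_odd n 1 hn le_rfl (by omega)
    rw [show ((1:ℕ):ℤ) - 1 = 0 from by norm_num] at h
    rw [h]
    have := h_one (n-1)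
    rw [show 2*(n-1)+1 = 2*n-1 from by omega, show 2*(n-1) = 2*n-1-1 from by omega] at this
    simpa using this

end Aux
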